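/- Let 𝒮 = ((X,d),(f_i)_{i∈I}) be an iterated function system (finitely many contractions on a complete metric space) with attractor A_𝒮. If the family (f_i(A_𝒮))_{i∈I} is connected (i.e., the intersection graph on I where i,j are joined when f_i(A_𝒮) ∩ f_j(A_𝒮) ≠ ∅ is a connected graph), then A_𝒮 is a connected topological space. Conversely, if A_𝒮 is connected then the family (f_i(A_𝒮))_{i∈I} is connected. -/

import Mathlib

/-- (Kigami) Let `𝒮 = ((X,d),(f_i)_{i∈I})` be an IFS (finitely many contractions
on a complete metric space) with attractor `K` (the unique nonempty compact set
with `K = ⋃_i f_i(K)`). The family `(f_i(K))_{i∈I}` is connected (any two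
indices are joined by a finite chain with consecutive pieces intersecting) if
and only if `K` is a connected set. -/
theorem stmt11 {X : Type*} [MetricSpace X] [CompleteSpace X]
    {I : Type*} [Finite I] [Nonempty I]
    (f : I → X → X) (hf : ∀ i, ∃ K : NNReal, K < 1 ∧ LipschitzWith K (f i))
    (K : Set X) (hne : K.Nonempty) (hcp : IsCompact K)
    (hattr : K = ⋃ i, f i '' K) :
    (∀ i j : I,
        Relation.ReflTransGen (fun a b => (f a '' K ∩ f b '' K).Nonempty) i j)
      ↔ IsConnected K := by
  classical
  have _ : Fintype I := Fintype.ofFinite I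
  obtain ⟨c, hc1, hc⟩ : ∃ c : NNReal, c < 1 ∧ ∀ i, LipschitzWith c (f i) := by
    choose g hg1 hg2 using hf
    refine ⟨Finset.univ.sup g, ?_, fun i => (hg2 i).weaken (Finset.le_sup (Finset.mem_univ i))⟩
    exact (Finset.sup_lt_iff (bot_lt_iff_ne_bot.2 one_ne_zero)).2 fun i _ => hg1 i
  have hfc : ∀ i, Continuous (f i) := fun i => (hc i).continuous
  have hsub : ∀ i, f i '' K ⊆ K := by
    intro i x hx
    rw [hattr]
    exact Set.mem_iUnion.2 ⟨i, hx⟩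
  have hcpp : ∀ i, IsCompact (f i '' K) := fun i => hcp.image (hfc i)
  have hnep : ∀ i, (f i '' K).Nonempty := fun i => hne.image _
  set D : ℝ := Metric.diam K with hD
  constructor
  · intro hchain
    -- Key: K is well-chained at every scale c^m * D.
    set R : ℝ → X → X → Prop := fun ε a b => b ∈ K ∧ dist a b ≤ ε with hR
    have key : ∀ m : ℕ, ∀ x ∈ K, ∀ y ∈ K,
        Relation.ReflTransGen (R ((c : ℝ) ^ m * D)) x y := by
      intro m
      induction m with
      | zero =>
        intro x hx y hy
        refine Relation.ReflTransGen.single ⟨hy, ?_⟩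
        simpa using Metric.dist_le_diam_of_mem hcp.isBounded hx hy
      | succ m ih =>
        -- within a single piece:
        have piece : ∀ i : I, ∀ u ∈ f i '' K, ∀ v ∈ f i '' K,
            Relation.ReflTransGen (R ((c : ℝ) ^ (m + 1) * D)) u v := by
          rintro i u ⟨a, ha, rfl⟩ v ⟨b, hb, rfl⟩
          refine Relation.ReflTransGen.lift (f i) ?_ a b (ih a ha b hb)
          rintro p q ⟨hq, hpq⟩
          refine ⟨hsub i ⟨q, hq, rfl⟩, ?_⟩
          calc dist (f i p) (f i q) ≤ (c : ℝ) * dist p q := (hc i).dist_le_mul p q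
            _ ≤ (c : ℝ) * ((c : ℝ) ^ m * D) :=
              mul_le_mul_of_nonneg_left hpq c.coe_nonneg
            _ = (c : ℝ) ^ (m + 1) * D := by ring
        intro x hx y hy
        rw [hattr] at hx hy
        obtain ⟨i, hxi⟩ := Set.mem_iUnion.1 hx
        obtain ⟨j, hyj⟩ := Set.mem_iUnion.1 hy
        -- induct along the chain of indices from i to j
        have main : ∀ j : I, Relation.ReflTransGen
            (fun a b => (f a '' K ∩ f b '' K).Nonempty) i j →
            ∀ v ∈ f j '' K, Relation.ReflTransGen (R ((c : ℝ) ^ (m + 1) * D)) x v := by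
          intro j hj
          induction hj with
          | refl => exact fun v hv => piece i x hxi v hv
          | tail _ hkl ih2 =>
            rename_i k l _
            obtain ⟨z, hzk, hzl⟩ := hkl
            intro v hv
            exact (ih2 z hzk).trans (piece l z hzl v hv)
        exact main j (hchain i j) y hyj
    -- well-chained + compact ⇒ connected
    refine ⟨hne, ?_⟩
    intro U V hU hV hKUV hKU hKV
    by_contra hcon
    rw [Set.not_nonempty_iff_eq_empty] at hcon
    set A : Set X := K ∩ Vᶜ with hA
    set B : Set X := K ∩ Uᶜ with hB
    have hAc : IsCompact A := hcp.inter_right hV.isClosed_compl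
    have hBc : IsCompact B := hcp.inter_right hU.isClosed_compl
    have hcover : ∀ z ∈ K, z ∈ A ∨ z ∈ B := by
      intro z hz
      rcases hKUV hz with h | h
      · left
        refine ⟨hz, fun hzV => ?_⟩
        exact Set.eq_empty_iff_forall_notMem.1 hcon z ⟨hz, h, hzV⟩
      · right
        refine ⟨hz, fun hzU => ?_⟩
        exact Set.eq_empty_iff_forall_notMem.1 hcon z ⟨hz, hzU, h⟩
    obtain ⟨a, haK, haU⟩ := hKU
    obtain ⟨b, hbK, hbV⟩ := hKV
    have haA : a ∈ A := ⟨haK, fun hV' =>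
      Set.eq_empty_iff_forall_notMem.1 hcon a ⟨haK, haU, hV'⟩⟩
    have hbB : b ∈ B := ⟨hbK, fun hU' =>
      Set.eq_empty_iff_forall_notMem.1 hcon b ⟨hbK, hU', hbV⟩⟩
    -- positive distance between A and B
    obtain ⟨a0, ha0A, ha0min⟩ :=
      hAc.exists_isMinOn ⟨a, haA⟩ ((Metric.continuous_infDist_pt B).continuousOn)
    have hBne : B.Nonempty := ⟨b, hbB⟩
    have hBcl : IsClosed B := hBc.isClosed
    have ha0B : a0 ∉ B := fun h => h.2 (by
      rcases hcover a0 ha0A.1 with h' | h'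
      · -- a0 ∈ A, need a0 ∈ U; a0 ∈ B means a0 ∉ U... contradiction path
        exact absurd h.2 (fun _ => h.2 (by
          rcases hKUV ha0A.1 with hu | hv
          · exact absurd hu h.2
          · exact absurd hv ha0A.2))
      · exact absurd h.2 (fun _ => h.2 (by
          rcases hKUV ha0A.1 with hu | hv
          · exact absurd hu h.2
          · exact absurd hv ha0A.2)))
    set δ : ℝ := Metric.infDist a0 B with hδdef
    have hδ : 0 < δ := (hBcl.notMem_iff_infDist_pos hBne).1 ha0B
    have hdistAB : ∀ p ∈ A, ∀ q ∈ B, δ ≤ dist p q := by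
      intro p hp q hq
      exact le_trans (ha0min hp) (Metric.infDist_le_dist_of_mem hq)
    -- choose scale below δ
    have hc1' : (c : ℝ) < 1 := hc1
    have htend : Filter.Tendsto (fun m : ℕ => (c : ℝ) ^ m * D) Filter.atTop (nhds 0) := by
      simpa using
        (tendsto_pow_atTop_nhds_zero_of_lt_one c.coe_nonneg hc1').mul_const D
    obtain ⟨m, hm⟩ := (htend.eventually (gt_mem_nhds hδ)).exists
    -- follow the chain from a to b
    have : b ∈ A := by
      have := key m a haK b hbK
      have stay : ∀ q, Relation.ReflTransGen (R ((c : ℝ) ^ m * D)) a q → q ∈ A := by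
        intro q hq
        induction hq with
        | refl => exact haA
        | tail _ hpq ih2 =>
          rename_i p q _
          obtain ⟨hqK, hdpq⟩ := hpq
          rcases hcover q hqK with h | h
          · exact h
          · exact absurd (lt_of_le_of_lt hdpq hm)
              (not_lt.2 (hdistAB p ih2 q h))
      exact stay b this
    exact this.2 (by
      rcases hKUV hbK with hu | hv
      · exact absurd hu hbB.2
      · exact hv)
  · rintro ⟨-, hpre⟩ i j
    by_contra hj
    set S : Set I := {k | Relation.ReflTransGen
      (fun a b => (f a '' K ∩ f b '' K).Nonempty) i k} with hS
    set A : Set X := ⋃ k ∈ S, f k '' K with hA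
    set B : Set X := ⋃ k ∈ Sᶜ, f k '' K with hB
    have hAcl : IsClosed A :=
      (Set.Finite.isCompact_biUnion (Set.toFinite S) fun k _ => hcpp k).isClosed
    have hBcl : IsClosed B :=
      (Set.Finite.isCompact_biUnion (Set.toFinite Sᶜ) fun k _ => hcpp k).isClosed
    have hKAB : K ⊆ A ∪ B := by
      intro x hx
      rw [hattr] at hx
      obtain ⟨k, hk⟩ := Set.mem_iUnion.1 hx
      by_cases hkS : k ∈ S
      · exact Or.inl (Set.mem_biUnion hkS hk)
      · exact Or.inr (Set.mem_biUnion hkS hk)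
    have hAB : A ∩ B = ∅ := by
      rw [Set.eq_empty_iff_forall_notMem]
      rintro z ⟨hzA, hzB⟩
      obtain ⟨k, hkS, hzk⟩ := Set.mem_iUnion₂.1 hzA
      obtain ⟨l, hlS, hzl⟩ := Set.mem_iUnion₂.1 hzB
      exact hlS (hkS.tail ⟨z, hzk, hzl⟩)
    have hKA : (K ∩ A).Nonempty := by
      obtain ⟨x, hx⟩ := hnep i
      exact ⟨x, hsub i hx, Set.mem_biUnion (Relation.ReflTransGen.refl) hx⟩
    have hKB : (K ∩ B).Nonempty := by
      obtain ⟨x, hx⟩ := hnep j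
      exact ⟨x, hsub j hx, Set.mem_biUnion hj hx⟩
    obtain ⟨z, hzK, hzA, hzB⟩ :=
      (isPreconnected_closed_iff.1 hpre) A B hAcl hBcl hKAB hKA hKB
    exact Set.eq_empty_iff_forall_notMem.1 hAB z ⟨hzA, hzB⟩
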